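/- Let m ≥ 1, S = T = L^m ⊆ (Z/4Z)^{2m}, S₀ = ∪{E_{m,i} : i ≡ m mod 2}, S₁ = ∪{E_{m,i} : i ≢ m mod 2}, S' = ({0}×S₀) ∪ ({1}×S₁) and T' = ({0}×T) ∪ ({1}×(−T)) in Z/2Z × (Z/4Z)^{2m}. Then S' and T' form a formally dual pair in Z/2Z × (Z/4Z)^{2m}, with |S'| = 2^{2m} and |T'| = 2^{2m+1}. -/

import Mathlib

open Finset

abbrev G4 : Type := ZMod 4 × ZMod 4

/-- The character `χ_y(x) = i^(y·x)` on `(ℤ/4ℤ)²`. -/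
noncomputable def chi (y x : G4) : ℂ := Complex.I ^ (y.1 * x.1 + y.2 * x.2).val

/-- The character `χ_z` on `((ℤ/4ℤ)²)^m`. -/
noncomputable def chiV {m : ℕ} (z x : Fin m → G4) : ℂ := ∏ i, chi (z i) (x i)

/-- The character `φ_{(w,z)}(a,x) = (-1)^{wa} χ_z(x)` on `ℤ/2ℤ × ((ℤ/4ℤ)²)^m`. -/
noncomputable def phi {m : ℕ} (y q : ZMod 2 × (Fin m → G4)) : ℂ :=
  (-1 : ℂ) ^ (y.1 * q.1).val * chiV y.2 q.2

def L : Finset G4 := {(0,0),(0,1),(1,0),(3,3)}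

def L1 : Finset G4 := {(0,0),(0,1),(1,0)}

def L2 : Finset G4 := {(3,3)}

/-- The number of coordinates of `z` lying in `A`. -/
def cnt {m : ℕ} (A : Finset G4) (z : Fin m → G4) : ℕ :=
  (univ.filter fun i => z i ∈ A).card

/-- `E_{m,i}`: the union of all products of `i` copies of `L₁` and `m - i` copies of `L₂`. -/
def E (m i : ℕ) : Finset (Fin m → G4) :=
  univ.filter fun x => (∀ j, x j ∈ L1 ∪ L2) ∧ cnt L1 x = i

/-- `S₀ = ∪ {E_{m,i} : i ≡ m (mod 2)}`. -/
def S0 (m : ℕ) : Finset (Fin m → G4) :=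
  ((range (m + 1)).filter fun i => i % 2 = m % 2).biUnion (E m)

/-- `S₁ = ∪ {E_{m,i} : i ≢ m (mod 2)}`. -/
def S1 (m : ℕ) : Finset (Fin m → G4) :=
  ((range (m + 1)).filter fun i => ¬ i % 2 = m % 2).biUnion (E m)

/-- `T = L^m ⊆ ((ℤ/4ℤ)²)^m`. -/
def Tm (m : ℕ) : Finset (Fin m → G4) := Fintype.piFinset fun _ => L

/-- `S' = ({0} × S₀) ∪ ({1} × S₁)`. -/
def S' (m : ℕ) : Finset (ZMod 2 × (Fin m → G4)) :=
  (({0} : Finset (ZMod 2)) ×ˢ S0 m) ∪ (({1} : Finset (ZMod 2)) ×ˢ S1 m)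

/-- `T' = ({0} × T) ∪ ({1} × (-T))`. -/
def T' (m : ℕ) : Finset (ZMod 2 × (Fin m → G4)) :=
  (({0} : Finset (ZMod 2)) ×ˢ Tm m) ∪
    (({1} : Finset (ZMod 2)) ×ˢ (Tm m).image fun t => -t)

/-- `ν_A(y)`, the number of pairs `(a,b) ∈ A × A` with `a - b = y`. -/
def nu {G : Type*} [AddCommGroup G] [DecidableEq G] (A : Finset G) (y : G) : ℕ :=
  ((A ×ˢ A).filter fun p => p.1 - p.2 = y).card

/-! ### Auxiliary development -/

namespace Aux19
open GaussianInt Zsqrtd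

/-! #### Gaussian-integer versions of the characters, and finite checks -/

def Iz : GaussianInt := ⟨0, 1⟩
def chiZ (y x : G4) : GaussianInt := Iz ^ (y.1 * x.1 + y.2 * x.2).val
def aZ (u : G4) : GaussianInt := ∑ x ∈ L, chiZ u x
def bZ (u : G4) : GaussianInt := (∑ x ∈ L1, chiZ u x) - chiZ u (3,3)
def nuL (u : G4) : ℕ := (L.filter fun b => b + u ∈ L).card
def rL (u : G4) : ℕ := (L.filter fun b => -(b + u) ∈ L).card

lemma toComplex_Iz : (Iz : ℂ) = Complex.I := by simp [Iz, toComplex_def']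

lemma chi_eq (y x : G4) : chi y x = toComplex (chiZ y x) := by
  rw [chiZ, map_pow, toComplex_Iz, chi]

lemma key_a : ∀ u : G4, (aZ u).norm = 4 * (nuL u : ℤ) := by decide
lemma key_b : ∀ u : G4, (bZ u).norm = 4 * (rL u : ℤ) := by decide
lemma key_r : ∀ u : G4, (L.filter fun b => u - b ∈ L).card = rL u := by decide
lemma key_n : ∀ u : G4, (L.filter fun b => b - u ∈ L).card = nuL u := by decide
lemma key_LL : L1 ∪ L2 = L := by decide
lemma key_fL1 : L.filter (fun u => u ∈ L1) = L1 := by decide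
lemma key_fL2 : L.filter (fun u => ¬ u ∈ L1) = {((3:ZMod 4),(3:ZMod 4))} := by decide
lemma L_card : L.card = 4 := by decide

/-! #### Structure of `S₀`, `S₁` -/

lemma cnt_le {m : ℕ} (x : Fin m → G4) : cnt L1 x ≤ m := by
  simpa [cnt] using (Finset.card_filter_le Finset.univ fun i => x i ∈ L1)

lemma S0_eq (m : ℕ) : S0 m = (Tm m).filter fun x => cnt L1 x % 2 = m % 2 := by
  ext x
  simp only [S0, mem_biUnion, mem_filter, mem_range, E, mem_univ, true_and, Tm,
    Fintype.mem_piFinset, key_LL]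
  constructor
  · rintro ⟨i, ⟨_, hp⟩, hall, hc⟩
    exact ⟨hall, hc ▸ hp⟩
  · rintro ⟨hall, hp⟩
    exact ⟨cnt L1 x, ⟨Nat.lt_succ_of_le (cnt_le x), hp⟩, hall, rfl⟩

lemma S1_eq (m : ℕ) : S1 m = (Tm m).filter fun x => ¬ cnt L1 x % 2 = m % 2 := by
  ext x
  simp only [S1, mem_biUnion, mem_filter, mem_range, E, mem_univ, true_and, Tm,
    Fintype.mem_piFinset, key_LL]
  constructor
  · rintro ⟨i, ⟨_, hp⟩, hall, hc⟩
    exact ⟨hall, hc ▸ hp⟩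
  · rintro ⟨hall, hp⟩
    exact ⟨cnt L1 x, ⟨Nat.lt_succ_of_le (cnt_le x), hp⟩, hall, rfl⟩

lemma S0_union_S1 (m : ℕ) : S0 m ∪ S1 m = Tm m := by
  rw [S0_eq, S1_eq, filter_union_filter_not_eq]

lemma S0_disj_S1 (m : ℕ) : Disjoint (S0 m) (S1 m) := by
  rw [S0_eq, S1_eq]; exact disjoint_filter_filter_not _ _ _

/-! #### Generic product/counting helpers -/

section generic
variable {α β : Type*}

lemma card_filter_singleton_product [DecidableEq α] [DecidableEq β]
    (a : α) (s : Finset β) (P : α × β → Prop) [DecidablePred P] :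
    ((({a} : Finset α) ×ˢ s).filter P).card = (s.filter fun x => P (a, x)).card := by
  rw [Finset.singleton_product, Finset.filter_map, Finset.card_map]
  rfl

lemma sum_singleton_product {M : Type*} [AddCommMonoid M] (a : α) (s : Finset β)
    (f : α × β → M) : ∑ p ∈ (({a} : Finset α) ×ˢ s), f p = ∑ x ∈ s, f (a, x) := by
  rw [Finset.sum_product, Finset.sum_singleton]

lemma nu_eq {G : Type*} [AddCommGroup G] [DecidableEq G] (A : Finset G) (y : G) :
    nu A y = (A.filter fun b => b + y ∈ A).card := by
  rw [nu]
  apply Finset.card_bij (fun p _ => p.2)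
  · rintro ⟨p1, p2⟩ hp
    simp only [Finset.mem_filter, Finset.mem_product] at hp ⊢
    obtain ⟨⟨h1, h2⟩, h3⟩ := hp
    have : p2 + y = p1 := by rw [← h3]; abel
    exact ⟨h2, this ▸ h1⟩
  · rintro ⟨p1, p2⟩ hp ⟨q1, q2⟩ hq h
    simp only [Finset.mem_filter, Finset.mem_product] at hp hq
    dsimp at h
    subst h
    have : p1 = q1 := by rw [← sub_add_cancel p1 p2, hp.2, ← sub_add_cancel q1 p2, hq.2]
    simp [this]
  · intro b hb
    simp only [Finset.mem_filter] at hb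
    exact ⟨(b + y, b), by simp [Finset.mem_filter, Finset.mem_product, hb.1, hb.2], rfl⟩

end generic

lemma Tm_filter_card {m : ℕ} (q : Fin m → G4 → Prop) [∀ j, DecidablePred (q j)] :
    ((Tm m).filter fun t => ∀ j, q j (t j)).card = ∏ j, (L.filter (q j)).card := by
  have h : ((Tm m).filter fun t => ∀ j, q j (t j))
      = Fintype.piFinset (fun j => L.filter (q j)) := by
    ext t
    simp [Tm, Fintype.mem_piFinset, Finset.mem_filter, forall_and]
  rw [h, Fintype.card_piFinset]

/-! #### Character sums -/

noncomputable def aC (u : G4) : ℂ := ∑ x ∈ L, chi u x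
noncomputable def bC (u : G4) : ℂ := (∑ x ∈ L1, chi u x) - chi u (3,3)

lemma aC_eq (u : G4) : aC u = toComplex (aZ u) := by
  simp [aC, aZ, map_sum, chi_eq]

lemma bC_eq (u : G4) : bC u = toComplex (bZ u) := by
  simp [bC, bZ, map_sub, map_sum, chi_eq]

lemma sum_Tm {m : ℕ} (z : Fin m → G4) : ∑ x ∈ Tm m, chiV z x = ∏ j, aC (z j) := by
  rw [Tm]
  rw [show (fun x => chiV z x) = fun x => ∏ j, chi (z j) (x j) from rfl]
  exact (Finset.prod_univ_sum _ _).symm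

lemma sum_b (u' : G4) :
    ∑ u ∈ L, (if u ∈ L1 then (1:ℂ) else -1) * chi u' u = bC u' := by
  have h : ∀ u ∈ L, (if u ∈ L1 then (1:ℂ) else -1) * chi u' u
      = (if u ∈ L1 then chi u' u else -(chi u' u)) := by
    intro u _; split <;> ring
  rw [Finset.sum_congr rfl h, Finset.sum_ite, key_fL1, key_fL2, Finset.sum_singleton, bC,
    sub_eq_add_neg]

noncomputable def sgn {m : ℕ} (x : Fin m → G4) : ℂ :=
  ∏ j, (if x j ∈ L1 then (1:ℂ) else -1)

lemma sgn_eq {m : ℕ} (x : Fin m → G4) : sgn x = (-1 : ℂ) ^ (m - cnt L1 x) := by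
  rw [sgn, Finset.prod_ite, Finset.prod_const, Finset.prod_const, one_pow, one_mul]
  congr 1
  have := Finset.card_filter_add_card_filter_not (s := (univ : Finset (Fin m)))
    (p := fun j => x j ∈ L1)
  simp only [Finset.card_univ, Fintype.card_fin] at this
  rw [← cnt] at this
  omega

lemma sgn_S0 {m : ℕ} {x : Fin m → G4} (hx : x ∈ S0 m) : sgn x = 1 := by
  rw [S0_eq, Finset.mem_filter] at hx
  rw [sgn_eq]
  have hle := cnt_le x
  have : Even (m - cnt L1 x) := by
    rw [Nat.even_sub hle, Nat.even_iff, Nat.even_iff]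
    omega
  exact this.neg_one_pow

lemma sgn_S1 {m : ℕ} {x : Fin m → G4} (hx : x ∈ S1 m) : sgn x = -1 := by
  rw [S1_eq, Finset.mem_filter] at hx
  rw [sgn_eq]
  have hle := cnt_le x
  have : Odd (m - cnt L1 x) := by
    rw [Nat.odd_sub hle, Nat.odd_iff, Nat.even_iff]
    omega
  exact this.neg_one_pow

lemma sum_sgn_Tm {m : ℕ} (z : Fin m → G4) :
    ∑ x ∈ Tm m, sgn x * chiV z x = ∏ j, bC (z j) := by
  have h : ∀ x : Fin m → G4, sgn x * chiV z x
      = ∏ j, (if x j ∈ L1 then (1:ℂ) else -1) * chi (z j) (x j) := by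
    intro x; rw [sgn, chiV, ← Finset.prod_mul_distrib]
  simp only [h, Tm]
  rw [← Finset.prod_univ_sum (fun _ : Fin m => L)
    (fun j u => (if u ∈ L1 then (1:ℂ) else -1) * chi (z j) u)]
  exact Finset.prod_congr rfl fun j _ => sum_b (z j)

lemma S'_disj (m : ℕ) :
    Disjoint ((({0} : Finset (ZMod 2)) ×ˢ S0 m)) ((({1} : Finset (ZMod 2)) ×ˢ S1 m)) := by
  rw [Finset.disjoint_left]
  rintro ⟨a, x⟩ h1 h2
  simp only [Finset.mem_product, Finset.mem_singleton] at h1 h2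
  rw [h1.1] at h2
  exact absurd h2.1 (by decide)

lemma sum_S' {m : ℕ} (w : ZMod 2) (z : Fin m → G4) :
    ∑ q ∈ S' m, phi (w, z) q
      = (∑ x ∈ S0 m, chiV z x) + (-1 : ℂ) ^ w.val * ∑ x ∈ S1 m, chiV z x := by
  rw [S', Finset.sum_union (S'_disj m), sum_singleton_product, sum_singleton_product,
    Finset.mul_sum]
  congr 1
  · refine Finset.sum_congr rfl fun x _ => ?_
    simp [phi]
  · refine Finset.sum_congr rfl fun x _ => ?_
    simp [phi]

lemma sum_S'_zero {m : ℕ} (z : Fin m → G4) :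
    ∑ q ∈ S' m, phi (0, z) q = ∏ j, aC (z j) := by
  rw [sum_S', ← sum_Tm, ← S0_union_S1, Finset.sum_union (S0_disj_S1 m)]
  simp

lemma sum_S'_one {m : ℕ} (z : Fin m → G4) :
    ∑ q ∈ S' m, phi (1, z) q = ∏ j, bC (z j) := by
  rw [sum_S', ← sum_sgn_Tm, ← S0_union_S1, Finset.sum_union (S0_disj_S1 m)]
  have h0 : ∑ x ∈ S0 m, sgn x * chiV z x = ∑ x ∈ S0 m, chiV z x :=
    Finset.sum_congr rfl fun x hx => by rw [sgn_S0 hx, one_mul]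
  have h1 : ∑ x ∈ S1 m, sgn x * chiV z x = -∑ x ∈ S1 m, chiV z x := by
    rw [← Finset.sum_neg_distrib]
    exact Finset.sum_congr rfl fun x hx => by rw [sgn_S1 hx]; ring
  rw [h0, h1]
  norm_num [ZMod.val_one]

/-! #### Cardinalities -/

lemma Tm_card (m : ℕ) : (Tm m).card = 4 ^ m := by
  rw [Tm, Fintype.card_piFinset]
  simp [L_card]

lemma S'_card (m : ℕ) : (S' m).card = 2 ^ (2 * m) := by
  rw [S', Finset.card_union_of_disjoint (S'_disj m)]
  simp only [Finset.card_product, Finset.card_singleton, one_mul]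
  rw [← Finset.card_union_of_disjoint (S0_disj_S1 m), S0_union_S1, Tm_card, pow_mul]
  norm_num

lemma T'_disj (m : ℕ) :
    Disjoint ((({0} : Finset (ZMod 2)) ×ˢ Tm m))
      ((({1} : Finset (ZMod 2)) ×ˢ (Tm m).image fun t => -t)) := by
  rw [Finset.disjoint_left]
  rintro ⟨a, x⟩ h1 h2
  simp only [Finset.mem_product, Finset.mem_singleton] at h1 h2
  rw [h1.1] at h2
  exact absurd h2.1 (by decide)

lemma T'_card (m : ℕ) : (T' m).card = 2 ^ (2 * m + 1) := by
  rw [T', Finset.card_union_of_disjoint (T'_disj m)]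
  simp only [Finset.card_product, Finset.card_singleton, one_mul]
  rw [Finset.card_image_of_injective _ neg_injective, Tm_card]
  have : (2:ℕ) ^ (2 * m + 1) = 4 ^ m * 2 := by rw [pow_succ, pow_mul]; norm_num
  omega

/-! #### Computation of `ν_{T'}` -/

lemma mem_Tm {m : ℕ} (t : Fin m → G4) : t ∈ Tm m ↔ ∀ j, t j ∈ L := by
  simp [Tm, Fintype.mem_piFinset]

lemma mem_T' {m : ℕ} (q : ZMod 2 × (Fin m → G4)) :
    q ∈ T' m ↔ (q.1 = 0 ∧ q.2 ∈ Tm m) ∨ (q.1 = 1 ∧ -q.2 ∈ Tm m) := by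
  obtain ⟨a, x⟩ := q
  simp only [T', Finset.mem_union, Finset.mem_product, Finset.mem_singleton,
    Finset.mem_image]
  constructor
  · rintro (⟨h1, h2⟩ | ⟨h1, t, ht, rfl⟩)
    · exact Or.inl ⟨h1, h2⟩
    · exact Or.inr ⟨h1, by simpa using ht⟩
  · rintro (⟨h1, h2⟩ | ⟨h1, h2⟩)
    · exact Or.inl ⟨h1, h2⟩
    · exact Or.inr ⟨h1, -x, h2, by simp⟩

lemma k2 : ∀ v : G4, (L.filter fun u => -(-u + v) ∈ L).card = nuL v := by decide
lemma k3 : ∀ v : G4, (L.filter fun u => -u + v ∈ L).card = rL v := by decide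

lemma T'_filter_card {m : ℕ} (Q : ZMod 2 × (Fin m → G4) → Prop) [DecidablePred Q] :
    ((T' m).filter Q).card
      = ((Tm m).filter fun t => Q (0, t)).card
        + ((Tm m).filter fun t => Q (1, -t)).card := by
  rw [T', Finset.filter_union,
    Finset.card_union_of_disjoint ((T'_disj m).mono (Finset.filter_subset _ _)
      (Finset.filter_subset _ _)),
    card_filter_singleton_product, card_filter_singleton_product,
    Finset.filter_image, Finset.card_image_of_injective _ neg_injective]

lemma nu_T'_zero {m : ℕ} (z : Fin m → G4) :
    nu (T' m) ((0 : ZMod 2), z) = 2 * ∏ j, nuL (z j) := by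
  rw [nu_eq, T'_filter_card]
  have e1 : ((Tm m).filter fun t => ((0:ZMod 2), t) + ((0:ZMod 2), z) ∈ T' m).card
      = ∏ j, nuL (z j) := by
    have hpred : ∀ t ∈ Tm m,
        (((0:ZMod 2), t) + ((0:ZMod 2), z) ∈ T' m) ↔ ∀ j, t j + z j ∈ L := by
      intro t _
      rw [mem_T']
      simp [mem_Tm, (show (0:ZMod 2) ≠ 1 by decide)]
    rw [Finset.filter_congr hpred, Tm_filter_card (fun j u => u + z j ∈ L)]
    rfl
  have e2 : ((Tm m).filter fun t => ((1:ZMod 2), -t) + ((0:ZMod 2), z) ∈ T' m).card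
      = ∏ j, nuL (z j) := by
    have hpred : ∀ t ∈ Tm m,
        (((1:ZMod 2), -t) + ((0:ZMod 2), z) ∈ T' m) ↔ ∀ j, -(-(t j) + z j) ∈ L := by
      intro t _
      rw [mem_T']
      simp [mem_Tm, (show (1:ZMod 2) ≠ 0 by decide)]
    rw [Finset.filter_congr hpred, Tm_filter_card (fun j u => -(-u + z j) ∈ L)]
    exact Finset.prod_congr rfl fun j _ => k2 (z j)
  rw [e1, e2, two_mul]

lemma nu_T'_one {m : ℕ} (z : Fin m → G4) :
    nu (T' m) ((1 : ZMod 2), z) = 2 * ∏ j, rL (z j) := by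
  rw [nu_eq, T'_filter_card]
  have e1 : ((Tm m).filter fun t => ((0:ZMod 2), t) + ((1:ZMod 2), z) ∈ T' m).card
      = ∏ j, rL (z j) := by
    have hpred : ∀ t ∈ Tm m,
        (((0:ZMod 2), t) + ((1:ZMod 2), z) ∈ T' m) ↔ ∀ j, -(t j + z j) ∈ L := by
      intro t _
      rw [mem_T']
      simp [mem_Tm, (show (0:ZMod 2) + 1 = 1 by decide), (show (1:ZMod 2) ≠ 0 by decide)]
    rw [Finset.filter_congr hpred, Tm_filter_card (fun j u => -(u + z j) ∈ L)]
    rfl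
  have e2 : ((Tm m).filter fun t => ((1:ZMod 2), -t) + ((1:ZMod 2), z) ∈ T' m).card
      = ∏ j, rL (z j) := by
    have hpred : ∀ t ∈ Tm m,
        (((1:ZMod 2), -t) + ((1:ZMod 2), z) ∈ T' m) ↔ ∀ j, -(t j) + z j ∈ L := by
      intro t _
      rw [mem_T']
      simp [mem_Tm, (show (1:ZMod 2) + 1 = 0 by decide), (show (0:ZMod 2) ≠ 1 by decide)]
    rw [Finset.filter_congr hpred, Tm_filter_card (fun j u => -u + z j ∈ L)]
    exact Finset.prod_congr rfl fun j _ => k3 (z j)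
  rw [e1, e2, two_mul]

/-! #### Norms -/

lemma normSq_prod_aC {m : ℕ} (z : Fin m → G4) :
    Complex.normSq (∏ j, aC (z j)) = ∏ j, (4 * (nuL (z j) : ℝ)) := by
  rw [map_prod]
  refine Finset.prod_congr rfl fun j _ => ?_
  rw [aC_eq, ← GaussianInt.intCast_real_norm, key_a]
  push_cast
  ring

lemma normSq_prod_bC {m : ℕ} (z : Fin m → G4) :
    Complex.normSq (∏ j, bC (z j)) = ∏ j, (4 * (rL (z j) : ℝ)) := by
  rw [map_prod]
  refine Finset.prod_congr rfl fun j _ => ?_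
  rw [bC_eq, ← GaussianInt.intCast_real_norm, key_b]
  push_cast
  ring

lemma arith (m : ℕ) (c : ℝ) :
    4 ^ m * c = ((2 : ℝ) ^ (2 * m)) ^ 2 / 2 ^ (2 * m + 1) * (2 * c) := by
  have h4 : (4 : ℝ) ^ m = 2 ^ (2 * m) := by rw [pow_mul]; norm_num
  have h2 : (2 : ℝ) ^ (2 * m + 1) = 2 ^ (2 * m) * 2 := pow_succ 2 (2 * m)
  have hne : (2 : ℝ) ^ (2 * m) ≠ 0 := by positivity
  rw [h4, h2]
  field_simp

end Aux19

/-- `S'` and `T'` form a formally dual pair in `ℤ/2ℤ × (ℤ/4ℤ)^{2m}`,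
with `|S'| = 2^{2m}` and `|T'| = 2^{2m+1}`. -/
theorem stmt19 (m : ℕ) (hm : 1 ≤ m) :
    (∀ y : ZMod 2 × (Fin m → G4),
      Complex.normSq (∑ q ∈ S' m, phi y q)
        = ((S' m).card : ℝ) ^ 2 / ((T' m).card : ℝ) * (nu (T' m) y : ℝ)) ∧
    (S' m).card = 2 ^ (2 * m) ∧ (T' m).card = 2 ^ (2 * m + 1) := by
  refine ⟨?_, Aux19.S'_card m, Aux19.T'_card m⟩
  rintro ⟨w, z⟩
  rw [Aux19.S'_card, Aux19.T'_card]
  push_cast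
  have hw : w = 0 ∨ w = 1 := by revert w; decide
  rcases hw with rfl | rfl
  · rw [Aux19.sum_S'_zero, Aux19.normSq_prod_aC, Aux19.nu_T'_zero]
    push_cast
    rw [Finset.prod_mul_distrib, Finset.prod_const, Finset.card_univ, Fintype.card_fin]
    exact Aux19.arith m _
  · rw [Aux19.sum_S'_one, Aux19.normSq_prod_bC, Aux19.nu_T'_one]
    push_cast
    rw [Finset.prod_mul_distrib, Finset.prod_const, Finset.card_univ, Fintype.card_fin]
    exact Aux19.arith m _
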